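/- For ordered particles x₀ ≤ … ≤ x_N solving ẋᵢ = v(m_N Σ_{k>i} V(xᵢ - x_k)), consecutive velocity differences satisfy |ẋ_{i+1}(t) - ẋᵢ(t)| ≤ Lip(v)·(m_N(λ + Lip(V)·M) + Lip(V)·(x_{i+1}(t) - xᵢ(t))), where M bounds x_N(t) - x₀(t). -/

import Mathlib

open scoped BigOperators

/-- Bound on consecutive velocity differences for ordered particles solving
`ẋᵢ = v(m_N ∑_{k>i} V(xᵢ - xₖ))`:
`|ẋ_{i+1} - ẋᵢ| ≤ Lip(v)(m_N(λ + Lip(V)·M) + Lip(V)(x_{i+1} - xᵢ))`,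
where `M` bounds the cloud diameter `x_N - x₀`. -/
theorem stmt_16 (N : ℕ) (hN : 1 ≤ N) (Lv LV lam M : ℝ)
    (hLv : 0 ≤ Lv) (hLV : 0 ≤ LV) (hlam : 0 < lam) (hM : 0 ≤ M)
    (v V : ℝ → ℝ)
    (hv : ∀ a b : ℝ, |v a - v b| ≤ Lv * |a - b|)
    (hVsupp : ∀ y : ℝ, 0 < y → V y = 0)
    (hVlip : ∀ a b : ℝ, a ≤ 0 → b ≤ 0 → |V a - V b| ≤ LV * |a - b|)
    (hV0 : V 0 = lam)
    (x : ℕ → ℝ)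
    (hord : ∀ j k : ℕ, j ≤ k → k ≤ N → x j ≤ x k)
    (hdiam : x N - x 0 ≤ M) :
    ∀ i < N,
      |v ((1 / N : ℝ) * ∑ k ∈ Finset.Ioc (i + 1) N, V (x (i + 1) - x k)) -
          v ((1 / N : ℝ) * ∑ k ∈ Finset.Ioc i N, V (x i - x k))| ≤
        Lv * ((1 / N : ℝ) * (lam + LV * M) + LV * (x (i + 1) - x i)) := by
  intro i hi
  have hi1 : i + 1 ≤ N := hi
  have hNR : (1 : ℝ) ≤ (N : ℝ) := by exact_mod_cast hN
  have hNpos : (0 : ℝ) < (N : ℝ) := lt_of_lt_of_le one_pos hNR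
  have hNne : (N : ℝ) ≠ 0 := ne_of_gt hNpos
  have hΔ : 0 ≤ x (i + 1) - x i := sub_nonneg.2 (hord i (i + 1) (Nat.le_succ i) hi1)
  have hΔM : x (i + 1) - x i ≤ M := by
    have h1 := hord 0 i (Nat.zero_le _) (le_trans (Nat.le_succ i) hi1)
    have h2 := hord (i + 1) N hi1 le_rfl
    linarith
  set S1 := ∑ k ∈ Finset.Ioc (i + 1) N, V (x (i + 1) - x k) with hS1
  set S0 := ∑ k ∈ Finset.Ioc i N, V (x i - x k) with hS0
  have hsplit : S0 = V (x i - x (i + 1)) + ∑ k ∈ Finset.Ioc (i + 1) N, V (x i - x k) := by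
    rw [hS0, ← Finset.Icc_add_one_left_eq_Ioc, Finset.Icc_eq_cons_Ioc hi1, Finset.sum_cons]
  have hterm : ∀ k ∈ Finset.Ioc (i + 1) N,
      |V (x (i + 1) - x k) - V (x i - x k)| ≤ LV * (x (i + 1) - x i) := by
    intro k hk
    rw [Finset.mem_Ioc] at hk
    have h1 : x (i + 1) - x k ≤ 0 := sub_nonpos.2 (hord (i + 1) k hk.1.le hk.2)
    have h2 : x i - x k ≤ 0 :=
      sub_nonpos.2 (hord i k (le_trans (Nat.le_succ i) hk.1.le) hk.2)
    have heq : (x (i + 1) - x k) - (x i - x k) = x (i + 1) - x i := by ring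
    calc |V (x (i + 1) - x k) - V (x i - x k)|
        ≤ LV * |(x (i + 1) - x k) - (x i - x k)| := hVlip _ _ h1 h2
      _ = LV * (x (i + 1) - x i) := by rw [heq, abs_of_nonneg hΔ]
  have hsum : |∑ k ∈ Finset.Ioc (i + 1) N, (V (x (i + 1) - x k) - V (x i - x k))|
      ≤ (N : ℝ) * (LV * (x (i + 1) - x i)) := by
    calc |∑ k ∈ Finset.Ioc (i + 1) N, (V (x (i + 1) - x k) - V (x i - x k))|
        ≤ ∑ k ∈ Finset.Ioc (i + 1) N, |V (x (i + 1) - x k) - V (x i - x k)| :=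
          Finset.abs_sum_le_sum_abs _ _
      _ ≤ ∑ _k ∈ Finset.Ioc (i + 1) N, LV * (x (i + 1) - x i) := Finset.sum_le_sum hterm
      _ = ((Finset.Ioc (i + 1) N).card : ℝ) * (LV * (x (i + 1) - x i)) := by
          rw [Finset.sum_const, nsmul_eq_mul]
      _ ≤ (N : ℝ) * (LV * (x (i + 1) - x i)) := by
          apply mul_le_mul_of_nonneg_right _ (by positivity)
          have hc : (Finset.Ioc (i + 1) N).card ≤ N := by
            rw [Nat.card_Ioc]; omega
          exact_mod_cast hc
  have hVb : |V (x i - x (i + 1))| ≤ lam + LV * M := by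
    have hx : x i - x (i + 1) ≤ 0 := by linarith
    have hlip := hVlip (x i - x (i + 1)) 0 hx le_rfl
    rw [hV0, sub_zero] at hlip
    have habs : |x i - x (i + 1)| = x (i + 1) - x i := by
      rw [abs_of_nonpos hx]; ring
    rw [habs] at hlip
    have h1 : |V (x i - x (i + 1))| ≤ |V (x i - x (i + 1)) - lam| + |lam| := by
      have := abs_add_le (V (x i - x (i + 1)) - lam) lam
      simpa using this
    have h2 : |lam| = lam := abs_of_pos hlam
    have h3 : LV * (x (i + 1) - x i) ≤ LV * M := mul_le_mul_of_nonneg_left hΔM hLV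
    linarith
  have hdiff : S1 - S0 =
      (∑ k ∈ Finset.Ioc (i + 1) N, (V (x (i + 1) - x k) - V (x i - x k)))
        - V (x i - x (i + 1)) := by
    rw [hsplit, hS1, Finset.sum_sub_distrib]; ring
  have hSS : |S1 - S0| ≤ (lam + LV * M) + (N : ℝ) * (LV * (x (i + 1) - x i)) := by
    rw [hdiff]
    calc |(∑ k ∈ Finset.Ioc (i + 1) N, (V (x (i + 1) - x k) - V (x i - x k)))
          - V (x i - x (i + 1))|
        ≤ |∑ k ∈ Finset.Ioc (i + 1) N, (V (x (i + 1) - x k) - V (x i - x k))|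
          + |V (x i - x (i + 1))| := abs_sub _ _
      _ ≤ (N : ℝ) * (LV * (x (i + 1) - x i)) + (lam + LV * M) := add_le_add hsum hVb
      _ = (lam + LV * M) + (N : ℝ) * (LV * (x (i + 1) - x i)) := by ring
  calc |v ((1 / N : ℝ) * S1) - v ((1 / N : ℝ) * S0)|
      ≤ Lv * |(1 / N : ℝ) * S1 - (1 / N : ℝ) * S0| := hv _ _
    _ = Lv * ((1 / N : ℝ) * |S1 - S0|) := by
        rw [← mul_sub, abs_mul, abs_of_pos (by positivity : (0:ℝ) < 1 / (N:ℝ))]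
    _ ≤ Lv * ((1 / N : ℝ) * ((lam + LV * M) + (N : ℝ) * (LV * (x (i + 1) - x i)))) := by
        apply mul_le_mul_of_nonneg_left _ hLv
        exact mul_le_mul_of_nonneg_left hSS (by positivity)
    _ = Lv * ((1 / N : ℝ) * (lam + LV * M) + LV * (x (i + 1) - x i)) := by
        have h : (1 / (N : ℝ)) * ((lam + LV * M) + (N : ℝ) * (LV * (x (i + 1) - x i)))
            = (1 / (N : ℝ)) * (lam + LV * M) + LV * (x (i + 1) - x i) := by
          field_simp
        rw [h]
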